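/- Let k ≥ 3 and let G be a finite connected simple graph on n vertices. Let G' be the simple graph whose vertex set is the disjoint union of V(G) (the part G₀) and V(G) × {1,…,k} (the part G₁), with the following edges and no others: u,v ∈ G₀ are adjacent iff uv ∈ E(G); (u,i) and (u,j) in G₁ are adjacent iff i ≠ j; for distinct u,v, (u,i) and (v,j) are adjacent iff uv ∈ E(G) and i ≠ j; and u ∈ G₀ is adjacent to (u,i) ∈ G₁ for every i ∈ {4,…,k}. Then: (1) G' has exactly (k+1)·n vertices; (2) G is 3-colorable if and only if G' is k-colorable; and (3) if G has maximum degree at most 4, then G' has maximum degree at most 5k−4. -/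

import Mathlib

/-- The graph `G'` built from `G`: the part `G₀` is a copy of `G` (on `V`), the part `G₁`
(on `V × Fin k`, where `Fin k` represents `{1, …, k}`) consists of a clique `K_u` for each
vertex `u` with antimatchings between cliques of adjacent vertices, and each `u ∈ G₀` is
joined to the vertices `(u, i)` of its clique for `i ∈ {4, …, k}` (i.e. `(i : ℕ) ≥ 3` in
`Fin k` numbering). -/
def cliqueGadget {V : Type*} (G : SimpleGraph V) (k : ℕ) :
    SimpleGraph (V ⊕ V × Fin k) where
  Adj x y :=
    match x, y with
    | Sum.inl u, Sum.inl v => G.Adj u v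
    | Sum.inl u, Sum.inr (v, i) => u = v ∧ 3 ≤ (i : ℕ)
    | Sum.inr (v, i), Sum.inl u => u = v ∧ 3 ≤ (i : ℕ)
    | Sum.inr (u, i), Sum.inr (v, j) => i ≠ j ∧ (u = v ∨ G.Adj u v)
  symm := by
    refine ⟨?_⟩
    rintro (u | ⟨u, i⟩) (v | ⟨v, j⟩) h
    · exact G.adj_symm h
    · exact h
    · exact h
    · exact ⟨h.1.symm, h.2.elim (fun h' => Or.inl h'.symm) (fun h' => Or.inr (G.adj_symm h'))⟩
  loopless := by
    refine ⟨?_⟩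
    rintro (u | ⟨u, i⟩) h
    · exact G.irrefl h
    · exact h.1 rfl

lemma ncard_sprod {α β : Type*} (A : Set α) (B : Set β) :
    (A ×ˢ B).ncard = A.ncard * B.ncard := by
  rw [← Nat.card_coe_set_eq, ← Nat.card_coe_set_eq, ← Nat.card_coe_set_eq,
    Nat.card_congr (Equiv.Set.prod A B), Nat.card_prod]

/-- Let `k ≥ 3` and let `G` be a finite connected simple graph on `n` vertices. Then:
(1) `G'` has exactly `(k+1) · n` vertices; (2) `G` is 3-colorable iff `G'` is
`k`-colorable; (3) if `G` has maximum degree at most 4, then `G'` has maximum degree at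
most `5k - 4`. -/
theorem cliqueGadget_card_colorable_degree {V : Type*} [Fintype V]
    (k : ℕ) (hk : 3 ≤ k) (G : SimpleGraph V) (hG : G.Connected) :
    Fintype.card (V ⊕ V × Fin k) = (k + 1) * Fintype.card V ∧
    (G.Colorable 3 ↔ (cliqueGadget G k).Colorable k) ∧
    ((∀ v : V, (G.neighborSet v).ncard ≤ 4) →
      ∀ x : V ⊕ V × Fin k, ((cliqueGadget G k).neighborSet x).ncard ≤ 5 * k - 4) := by
  refine ⟨?_, ⟨?_, ?_⟩, ?_⟩
  · simp [Fintype.card_sum, Fintype.card_prod]; ring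
  · rintro ⟨c⟩
    refine ⟨SimpleGraph.Coloring.mk
      (fun x => match x with
        | Sum.inl u => ⟨(c u : ℕ), by have := (c u).isLt; omega⟩
        | Sum.inr (u, i) => i) ?_⟩
    rintro (u | ⟨u, i⟩) (v | ⟨v, j⟩) h
    · intro h'
      dsimp only at h'
      simp only [Fin.mk.injEq] at h'
      exact c.valid h (Fin.ext h')
    · have : 3 ≤ (j : ℕ) := h.2
      have := (c u).isLt
      simp only [ne_eq, Fin.ext_iff]
      omega
    · have : 3 ≤ (i : ℕ) := h.2
      have := (c v).isLt
      simp only [ne_eq, Fin.ext_iff]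
      omega
    · exact h.1
  · rintro ⟨C⟩
    have hinj : ∀ u : V, Function.Injective (fun i : Fin k => C (Sum.inr (u, i))) := by
      intro u i j hij
      by_contra hne
      exact C.valid (show (cliqueGadget G k).Adj (Sum.inr (u, i)) (Sum.inr (u, j)) from
        ⟨hne, Or.inl rfl⟩) hij
    have hsurj : ∀ u : V, Function.Surjective (fun i : Fin k => C (Sum.inr (u, i))) :=
      fun u => Finite.surjective_of_injective (hinj u)
    choose i₀ hi₀ using fun u => hsurj u (C (Sum.inl u))
    have hlt : ∀ u, (i₀ u : ℕ) < 3 := by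
      intro u
      by_contra hge
      exact C.valid (show (cliqueGadget G k).Adj (Sum.inl u) (Sum.inr (u, i₀ u)) from
        ⟨rfl, by omega⟩) (hi₀ u).symm
    refine ⟨SimpleGraph.Coloring.mk (fun u => ⟨(i₀ u : ℕ), hlt u⟩) ?_⟩
    intro u v huv heq
    have hiv : i₀ u = i₀ v := Fin.ext (by simpa [Fin.ext_iff] using heq)
    -- C (inr (v, i₀ u)) = C (inr (u, i₀ u))
    have hi₀' : ∀ w, C (Sum.inr (w, i₀ w)) = C (Sum.inl w) := hi₀
    obtain ⟨j, hj⟩ := hsurj v (C (Sum.inr (u, i₀ u)))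
    have hj' : C (Sum.inr (v, j)) = C (Sum.inr (u, i₀ u)) := hj
    have hji : j = i₀ u := by
      by_contra hne
      exact C.valid (show (cliqueGadget G k).Adj (Sum.inr (v, j)) (Sum.inr (u, i₀ u)) from
        ⟨hne, Or.inr (G.adj_symm huv)⟩) hj'
    rw [hji] at hj'
    have : C (Sum.inl u) = C (Sum.inl v) := by
      rw [← hi₀' u, ← hi₀' v, ← hiv]
      exact hj'.symm
    exact C.valid (show (cliqueGadget G k).Adj (Sum.inl u) (Sum.inl v) from huv) this
  · intro hdeg x
    match x with
    | Sum.inl u =>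
      have hsub : (cliqueGadget G k).neighborSet (Sum.inl u) ⊆
          Sum.inl '' (G.neighborSet u) ∪ Sum.inr '' (({u} : Set V) ×ˢ (Set.univ : Set (Fin k))) := by
        rintro (v | ⟨v, j⟩) h
        · exact Or.inl ⟨v, h, rfl⟩
        · exact Or.inr ⟨(v, j), ⟨h.1.symm, trivial⟩, rfl⟩
      calc ((cliqueGadget G k).neighborSet (Sum.inl u)).ncard
          ≤ (Sum.inl '' (G.neighborSet u) ∪
            Sum.inr '' (({u} : Set V) ×ˢ (Set.univ : Set (Fin k)))).ncard :=
            Set.ncard_le_ncard hsub (Set.Finite.union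
              ((Set.toFinite _).image _) ((Set.toFinite _).image _))
        _ ≤ (Sum.inl '' (G.neighborSet u)).ncard +
            (Sum.inr '' (({u} : Set V) ×ˢ (Set.univ : Set (Fin k)))).ncard :=
            Set.ncard_union_le _ _
        _ ≤ 4 + 1 * k := by
            gcongr ?_ + ?_
            · rw [Set.ncard_image_of_injective _ Sum.inl_injective]
              exact hdeg u
            · rw [Set.ncard_image_of_injective _ Sum.inr_injective, ncard_sprod,
                Set.ncard_singleton, Set.ncard_univ, Nat.card_eq_fintype_card, Fintype.card_fin]
        _ ≤ 5 * k - 4 := by omega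
    | Sum.inr (u, i) =>
      have hsub : (cliqueGadget G k).neighborSet (Sum.inr (u, i)) ⊆
          Sum.inl '' ({u} : Set V) ∪
          Sum.inr '' ((insert u (G.neighborSet u)) ×ˢ {j : Fin k | j ≠ i}) := by
        rintro (v | ⟨v, j⟩) h
        · exact Or.inl ⟨v, h.1, rfl⟩
        · refine Or.inr ⟨(v, j), ⟨?_, h.1.symm⟩, rfl⟩
          rcases h.2 with h' | h'
          · exact Or.inl h'.symm
          · exact Or.inr h'
      have hB : ({j : Fin k | j ≠ i} : Set (Fin k)).ncard = k - 1 := by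
        have : ({j : Fin k | j ≠ i} : Set (Fin k)) = Set.univ \ {i} := by
          ext j; simp
        rw [this, Set.ncard_diff (by simp) (Set.toFinite _), Set.ncard_singleton,
          Set.ncard_univ, Nat.card_eq_fintype_card, Fintype.card_fin]
      calc ((cliqueGadget G k).neighborSet (Sum.inr (u, i))).ncard
          ≤ (Sum.inl '' ({u} : Set V) ∪
            Sum.inr '' ((insert u (G.neighborSet u)) ×ˢ {j : Fin k | j ≠ i})).ncard :=
            Set.ncard_le_ncard hsub (Set.Finite.union
              ((Set.toFinite _).image _) ((Set.toFinite _).image _))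
        _ ≤ (Sum.inl '' ({u} : Set V)).ncard +
            (Sum.inr '' ((insert u (G.neighborSet u)) ×ˢ {j : Fin k | j ≠ i})).ncard :=
            Set.ncard_union_le _ _
        _ ≤ 1 + 5 * (k - 1) := by
            gcongr ?_ + ?_
            · rw [Set.ncard_image_of_injective _ Sum.inl_injective, Set.ncard_singleton]
            · rw [Set.ncard_image_of_injective _ Sum.inr_injective, ncard_sprod, hB]
              gcongr
              calc (insert u (G.neighborSet u)).ncard ≤ (G.neighborSet u).ncard + 1 :=
                    Set.ncard_insert_le _ _
                _ ≤ 5 := by have := hdeg u; omega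
        _ ≤ 5 * k - 4 := by omega
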